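/- Let r = P·φ where P is prime and φ is a positive integer with φ⁴ < r. Then there is no D(−1) triple {1, 1+r², 1+s²} with gcd(r, s) = 1 extendable from the pair: more precisely, there are no positive integers s, t with gcd(r, s) = 1 and t² − (1+r²)s² = r² such that (t, s) is not equivalent to (1+r²−r, ±(r−1)) as solutions of X² − (1+r²)Y² = r². -/

import Mathlib

lemma one_le_mul' {x y : ℤ} (hx : 1 ≤ x) (hy : 1 ≤ y) : 1 ≤ x*y := by nlinarith

lemma sq_sq_ne {x y : ℤ} (hx : 1 ≤ x) (hy : 1 ≤ y) : x^2*y^2 ≠ 0 :=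
  mul_ne_zero (pow_ne_zero 2 (by intro h; rw [h] at hx; norm_num at hx))
    (pow_ne_zero 2 (by intro h; rw [h] at hy; norm_num at hy))



lemma my_split : ∀ (n A B : ℕ), Odd n → n^2 ∣ A * B →
    (∀ p : ℕ, p.Prime → p ∣ n → ¬(p ∣ A ∧ p ∣ B)) →
    ∃ a b : ℕ, n = a * b ∧ a^2 ∣ A ∧ b^2 ∣ B := by
  intro n
  induction n using Nat.strong_induction_on with
  | _ n ih =>
    intro A B hodd hdvd hp
    rcases eq_or_ne n 1 with rfl | hn1
    · exact ⟨1, 1, by norm_num, one_dvd _, one_dvd _⟩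
    obtain ⟨p, hpp, hpn⟩ := Nat.exists_prime_and_dvd hn1
    have hn0 : n ≠ 0 := by rintro rfl; simp [Nat.odd_iff] at hodd
    obtain ⟨n', rfl⟩ := hpn
    have hn'0 : n' ≠ 0 := by rintro rfl; simp at hn0
    have hp2 : 2 ≤ p := hpp.two_le
    have hplt : n' < p * n' :=
      lt_of_lt_of_le (by omega : n' < 2 * n')
        (Nat.mul_le_mul_right _ hp2)
    have hpAB : p ∣ A * B := by
      have h1 : p ∣ (p * n')^2 := (Dvd.intro n' rfl).trans (dvd_pow_self _ two_ne_zero)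
      exact h1.trans hdvd
    have hodd' : Odd n' := by
      rcases Nat.even_or_odd n' with he | ho
      · exfalso
        have : Even (p * n') := he.mul_left p
        simp [Nat.odd_iff, Nat.even_iff] at hodd this; omega
      · exact ho
    have hnotboth := hp p hpp (Dvd.intro n' rfl)
    have key : ∀ X Y : ℕ, ¬ (p ∣ Y) → (p*n')^2 ∣ X * Y →
        (∀ q : ℕ, q.Prime → q ∣ n' → ¬(q ∣ X ∧ q ∣ Y)) →
        ∃ a b : ℕ, a * b = p * n' ∧ a^2 ∣ X ∧ b^2 ∣ Y ∧ p ∣ a := by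
      intro X Y hpY hdXY hq
      have hcop : Nat.Coprime (p^2) Y :=
        ((Nat.Prime.coprime_iff_not_dvd hpp).mpr hpY).pow_left 2
      have hp2X : p^2 ∣ X := by
        refine hcop.dvd_of_dvd_mul_right ?_
        calc p^2 ∣ (p*n')^2 := pow_dvd_pow_of_dvd (Dvd.intro n' rfl) 2
        _ ∣ X * Y := hdXY
      obtain ⟨X', rfl⟩ := hp2X
      have hdXY' : n'^2 ∣ X' * Y := by
        have h1 : p^2 * n'^2 ∣ p^2 * (X' * Y) := by
          rw [← mul_pow]; rw [show p^2 * (X' * Y) = p^2 * X' * Y by ring]; exact hdXY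
        exact (mul_dvd_mul_iff_left (pow_ne_zero 2 hpp.pos.ne')).mp h1
      obtain ⟨a', b', hab, haX, hbY⟩ := ih n' hplt X' Y hodd' hdXY'
        (fun q hq' hqn' => by
          intro ⟨hqX', hqY⟩
          exact hq q hq' hqn' ⟨hqX'.mul_left _, hqY⟩)
      exact ⟨p * a', b', by rw [hab]; ring, by
        rw [mul_pow]; exact mul_dvd_mul_left _ haX, hbY, Dvd.intro a' rfl⟩
    have hAorB : p ∣ A ∨ p ∣ B := (Nat.Prime.dvd_mul hpp).mp hpAB
    rcases hAorB with hA | hB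
    · have hpB : ¬ p ∣ B := fun h => hnotboth ⟨hA, h⟩
      obtain ⟨a, b, hab, hX, hY, _⟩ := key A B hpB hdvd
        (fun q hq' hqn' => hp q hq' (hqn'.mul_left p))
      exact ⟨a, b, hab.symm, hX, hY⟩
    · have hpA : ¬ p ∣ A := fun h => hnotboth ⟨h, hB⟩
      obtain ⟨b, a, hab, hY, hX, _⟩ := key B A hpA (by rwa [mul_comm A B] at hdvd)
        (fun q hq' hqn' => by
          intro ⟨h1, h2⟩; exact hp q hq' (hqn'.mul_left p) ⟨h2, h1⟩)
      exact ⟨a, b, by rw [← hab]; ring, hX, hY⟩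


set_option maxHeartbeats 1000000 in
lemma core1 (r φ s t m q u v : ℤ) (hφ : 0 < φ) (hφ4 : φ^4 < r)
    (hq : q ∣ φ) (hq1 : 1 ≤ q) (hm1 : 1 ≤ m) (hmq : m * q = r)
    (hs : 0 < s)
    (hA : t - s = m^2 * u) (hB : t + s = q^2 * v)
    (huv : u * v = 1 + s^2)
    (hAlt : t - s < r^2) (hApos : 0 < t - s) (hBpos : 0 < t + s) : False := by
  have hφ1 : 1 ≤ φ := hφ
  have hφ2 : 1 ≤ φ^2 := by nlinarith
  have hφ41 : 1 ≤ φ^4 := by nlinarith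
  have hr : 2 ≤ r := by linarith
  have hqφ : q ≤ φ := Int.le_of_dvd hφ hq
  have hu1 : 1 ≤ u := by
    by_contra hc
    push_neg at hc
    have h0 : m^2*u ≤ 0 := mul_nonpos_of_nonneg_of_nonpos (sq_nonneg m) (by linarith)
    rw [← hA] at h0; linarith
  have hv1 : 1 ≤ v := by
    by_contra hc
    push_neg at hc
    have h0 : q^2*v ≤ 0 := mul_nonpos_of_nonneg_of_nonpos (sq_nonneg q) (by linarith)
    rw [← hB] at h0; linarith
  have huq : u < q^2 := by
    rw [hA] at hAlt
    have h2 : m^2*u < m^2*q^2 := by nlinarith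
    exact lt_of_mul_lt_mul_left h2 (sq_nonneg m)
  have h2s : 2*s = q^2*v - m^2*u := by linarith
  have hmu : m^2*u^2 = q^2*(1+s^2) - 2*s*u := by linear_combination u*h2s + q^2*huv
  set k : ℤ := q^2*s - 2*u with hk
  have hsk : s*k = m^2*u^2 - q^2 := by rw [hk]; linear_combination -hmu
  have hq2φ2 : q^2 ≤ φ^2 := by nlinarith
  have hφ2φ4 : φ^2 ≤ φ^4 := by nlinarith
  have hmgtq : q < m := by
    by_contra hcon
    push_neg at hcon
    have h2 : m*q ≤ q*q := mul_le_mul_of_nonneg_right hcon (by linarith)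
    have h3 : q*q ≤ φ*φ := mul_le_mul hqφ hqφ (by linarith) (by linarith)
    nlinarith
  have hu2 : 1 ≤ u^2 := by nlinarith
  have hmq2 : q^2 < m^2 := by nlinarith
  have hm2u2 : m^2 ≤ m^2*u^2 := le_mul_of_one_le_right (by positivity) hu2
  have hk1 : 1 ≤ k := by
    by_contra hc
    push_neg at hc
    have h0 : s*k ≤ 0 := mul_nonpos_of_nonneg_of_nonpos (by linarith) (by linarith)
    linarith
  set x : ℤ := k + u with hx
  have h1 : q^2*(s*k) = r^2*u^2 - q^4 := by
    rw [hsk]; linear_combination u^2*(m*q+r)*hmq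
  have hxsq : x^2 - r^2*u^2 = u^2 - q^4 := by
    rw [hx]; linear_combination h1 + k*hk
  have hx2 : 2 ≤ x := by rw [hx]; linarith
  have huq4 : u^2 < q^4 := by
    nlinarith [mul_pos (by linarith : (0:ℤ) < q^2 - u) (by nlinarith : (0:ℤ) < q^2 + u)]
  have hrupos : 0 < r*u := mul_pos (by linarith) (by linarith)
  have hxlt : x < r*u := by
    by_contra hcon
    push_neg at hcon
    have := pow_le_pow_left₀ (by linarith : (0:ℤ) ≤ r*u) hcon 2
    nlinarith
  have hfinal : (r*u - x)*(r*u + x) = q^4 - u^2 := by linear_combination -hxsq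
  have h1' : 1 ≤ r*u - x := by linarith
  have hru : r ≤ r*u := le_mul_of_one_le_right (by linarith) hu1
  have h2' : r + 2 ≤ r*u + x := by linarith
  have hprod : 1*(r+2) ≤ (r*u - x)*(r*u + x) :=
    mul_le_mul h1' h2' (by linarith) (by linarith)
  have hq4 : q^4 ≤ φ^4 := by nlinarith [mul_le_mul hq2φ2 hq2φ2 (sq_nonneg q) (by positivity : (0:ℤ) ≤ φ^2)]
  linarith

set_option maxHeartbeats 1000000 in
lemma core2 (r φ s t m q u v : ℤ) (hφ : 0 < φ) (hφ4 : φ^4 < r)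
    (hm : m ∣ φ) (hq1 : 1 ≤ q) (hm1 : 1 ≤ m) (hmq : m * q = r)
    (hs : 0 < s)
    (hA : t - s = m^2 * u) (hB : t + s = q^2 * v)
    (huv : u * v = 1 + s^2)
    (hBlt : t + s < r^2 + r) (hApos : 0 < t - s) (hBpos : 0 < t + s) :
    s = r - 1 := by
  have hφ1 : 1 ≤ φ := hφ
  have hφ2 : 1 ≤ φ^2 := by nlinarith
  have hφ41 : 1 ≤ φ^4 := by nlinarith
  have hr : 2 ≤ r := by linarith
  have hmφ : m ≤ φ := Int.le_of_dvd hφ hm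
  have hu1 : 1 ≤ u := by
    by_contra hc
    push_neg at hc
    have h0 : m^2*u ≤ 0 := mul_nonpos_of_nonneg_of_nonpos (sq_nonneg m) (by linarith)
    rw [← hA] at h0; linarith
  have hv1 : 1 ≤ v := by
    by_contra hc
    push_neg at hc
    have h0 : q^2*v ≤ 0 := mul_nonpos_of_nonneg_of_nonpos (sq_nonneg q) (by linarith)
    rw [← hB] at h0; linarith
  have hm2φ2 : m^2 ≤ φ^2 := by nlinarith
  have hφ2φ4 : φ^2 ≤ φ^4 := by nlinarith
  have hφ2r : φ^2 < r := by linarith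
  have hqm : q^2*m^2 = r^2 := by linear_combination (m*q+r)*hmq
  have hq2r : r < q^2 := by
    by_contra hcon
    push_neg at hcon
    have h2 : q^2*m^2 ≤ r*m^2 := mul_le_mul_of_nonneg_right hcon (sq_nonneg m)
    have h3 : r*m^2 < r*r := by
      apply mul_lt_mul_of_pos_left (by linarith) (by linarith)
    nlinarith
  have hvm : v ≤ m^2 := by
    by_contra hcon
    push_neg at hcon
    have h1 : q^2*(m^2+1) ≤ q^2*v := mul_le_mul_of_nonneg_left (by linarith) (sq_nonneg q)
    rw [← hB] at h1
    nlinarith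
  have h2s : 2*s = q^2*v - m^2*u := by linarith
  have hqv : q^2*v^2 = m^2*(1+s^2) + 2*s*v := by linear_combination -v*h2s + m^2*huv
  set k : ℤ := m^2*s + 2*v with hk
  have hsk : s*k = q^2*v^2 - m^2 := by rw [hk]; linear_combination -hqv
  set x : ℤ := k - v with hx
  have h1 : m^2*(s*k) = r^2*v^2 - m^4 := by
    rw [hsk]; linear_combination v^2*(m*q+r)*hmq
  have hxsq : x^2 - r^2*v^2 = v^2 - m^4 := by
    rw [hx]; linear_combination h1 + k*hk
  have hm2s : 1 ≤ m^2*s := mul_pos (by positivity) hs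
  have hx2 : 2 ≤ x := by rw [hx, hk]; linarith
  rcases eq_or_lt_of_le hvm with heq | hlt
  · -- v = m^2 : conclude s = r - 1
    have hxrv : x^2 = (r*v)^2 := by
      rw [heq] at hxsq ⊢; linear_combination hxsq
    have hxpos : 0 < x := by linarith
    have hrv : 0 < r*v := mul_pos (by linarith) (by linarith)
    have hxeq : x = r*v := by
      have hfac : (x - r*v)*(x + r*v) = 0 := by linear_combination hxrv
      rcases mul_eq_zero.mp hfac with h | h
      · linarith
      · linarith
    have h5 : m^2*s + v = r*v := by rw [hx, hk] at hxeq; linarith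
    rw [heq] at h5
    have h6 : m^2*s = m^2*(r-1) := by linarith
    exact mul_left_cancel₀ (by positivity) h6
  · -- v < m^2 : contradiction
    exfalso
    have hvm4 : v^2 < m^4 := by
      nlinarith [mul_pos (by linarith : (0:ℤ) < m^2 - v) (by nlinarith : (0:ℤ) < m^2 + v)]
    have hrvpos : 0 < r*v := mul_pos (by linarith) (by linarith)
    have hxlt : x < r*v := by
      by_contra hcon
      push_neg at hcon
      have := pow_le_pow_left₀ (by linarith : (0:ℤ) ≤ r*v) hcon 2
      nlinarith
    have hfinal : (r*v - x)*(r*v + x) = m^4 - v^2 := by linear_combination -hxsq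
    have h1' : 1 ≤ r*v - x := by linarith
    have hrv : r ≤ r*v := le_mul_of_one_le_right (by linarith) hv1
    have h2' : r + 2 ≤ r*v + x := by linarith
    have hprod : 1*(r+2) ≤ (r*v - x)*(r*v + x) :=
      mul_le_mul h1' h2' (by linarith) (by linarith)
    have hm4 : m^4 ≤ φ^4 := by nlinarith [mul_le_mul hm2φ2 hm2φ2 (sq_nonneg m) (by positivity : (0:ℤ) ≤ φ^2)]
    have hv21 : 1 ≤ v^2 := by nlinarith
    linarith

lemma gcd_stable (r s k : ℤ) : Int.gcd r (s + r*k) = Int.gcd r s := by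
  apply Nat.dvd_antisymm
  · have h1 : (↑(Int.gcd r (s+r*k)):ℤ) ∣ r := Int.gcd_dvd_left _ _
    have h2 : (↑(Int.gcd r (s+r*k)):ℤ) ∣ s + r*k := Int.gcd_dvd_right _ _
    have h3 : (↑(Int.gcd r (s+r*k)):ℤ) ∣ s := by
      have h4 := dvd_sub h2 (h1.mul_right k)
      rwa [show s + r*k - r*k = s by ring] at h4
    exact_mod_cast Int.dvd_coe_gcd h1 h3
  · have h1 : (↑(Int.gcd r s):ℤ) ∣ r := Int.gcd_dvd_left _ _
    have h2 : (↑(Int.gcd r s):ℤ) ∣ s := Int.gcd_dvd_right _ _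
    have h3 : (↑(Int.gcd r s):ℤ) ∣ s + r*k := dvd_add h2 (h1.mul_right k)
    exact_mod_cast Int.dvd_coe_gcd h1 h3


set_option maxHeartbeats 1600000 in
lemma base_case (r P φ s t : ℤ) (hP : Prime P) (hφ : 0 < φ) (hrPφ : r = P * φ)
    (hφ4 : φ^4 < r) (hs : 0 < s) (hsr : s < r) (ht : 0 < t)
    (hgcd : Int.gcd r s = 1) (heq : t^2 - (1+r^2)*s^2 = r^2) :
    r^2 ∣ t + s := by
  have hφ1 : 1 ≤ φ := hφ
  have hφ2 : 1 ≤ φ^2 := by nlinarith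
  have hφ2φ4 : φ^2 ≤ φ^4 := by nlinarith
  have hφ41 : 1 ≤ φ^4 := by nlinarith
  have hr2 : 2 ≤ r := by linarith
  have hPpos : 0 < P := by
    rcases le_or_gt P 0 with h | h
    · exfalso; nlinarith [mul_nonpos_of_nonpos_of_nonneg h (le_of_lt hφ)]
    · exact h
  have hP2le : 2 ≤ P := by
    have h := Int.prime_iff_natAbs_prime.mp hP
    have := h.two_le
    omega
  have htgt : r*s < t := by
    by_contra hc
    push_neg at hc
    have h2 : t^2 ≤ (r*s)^2 := pow_le_pow_left₀ (le_of_lt ht) hc 2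
    nlinarith [sq_nonneg s, mul_pos (show (0:ℤ) < r by linarith) (show (0:ℤ) < r by linarith)]
  have htlt : t < r*(s+1) := by
    by_contra hc
    push_neg at hc
    have h2 : (r*(s+1))^2 ≤ t^2 := pow_le_pow_left₀ (by positivity) hc 2
    nlinarith [mul_pos hs (by nlinarith : (0:ℤ) < 2*r^2 - s)]
  have hApos : 0 < t - s := by
    nlinarith [le_mul_of_one_le_left (le_of_lt hs) (by linarith : (1:ℤ) ≤ r)]
  have hBpos : 0 < t + s := by linarith
  have hrs1 : r*(s+1) ≤ r*r := mul_le_mul_of_nonneg_left (by linarith) (by linarith)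
  have hALT : t - s < r^2 := by nlinarith
  have hBLT : t + s < r^2 + r := by nlinarith
  have hAB : (t-s)*(t+s) = r^2*(1+s^2) := by linear_combination heq
  -- P = 2 case
  rcases eq_or_ne P 2 with rfl | hPne2
  · have hφlt : φ < 2 := by nlinarith
    have hφeq : φ = 1 := by omega
    have hre : r = 2 := by rw [hrPφ, hφeq]; ring
    have hse : s = 1 := by omega
    have hte : t = 3 := by
      rw [hre, hse] at heq
      have h9 : (t-3)*(t+3) = 0 := by linear_combination heq
      rcases mul_eq_zero.mp h9 with h | h
      · linarith
      · linarith
    rw [hre, hse, hte]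
    decide
  -- P odd
  have hPodd : ¬ (2:ℤ) ∣ P := by
    intro h2P
    obtain ⟨c, hc⟩ := h2P
    rcases hP.irreducible.isUnit_or_isUnit hc with hu | hu
    · rcases Int.isUnit_iff.mp hu with h | h <;> norm_num at h
    · rcases Int.isUnit_iff.mp hu with rfl | rfl
      · exact hPne2 (by linarith)
      · nlinarith
  have hPφ : ¬ P ∣ φ := by
    intro h
    have h1 : P ≤ φ := Int.le_of_dvd hφ h
    have h2 : P*φ ≤ φ*φ := mul_le_mul_of_nonneg_right h1 (le_of_lt hφ)
    nlinarith
  have hPr : P ∣ r := ⟨φ, hrPφ⟩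
  have hP2r2 : P^2 ∣ r^2 := pow_dvd_pow_of_dvd hPr 2
  have hP2AB : P^2 ∣ (t-s)*(t+s) := by rw [hAB]; exact dvd_mul_of_dvd_left hP2r2 _
  have hPdvd2 : ¬ P ∣ (2:ℤ) := fun h => by
    have := Int.le_of_dvd (by norm_num) h
    have : P = 2 := by omega
    exact hPne2 this
  have hnb : ¬(P ∣ (t-s) ∧ P ∣ (t+s)) := by
    rintro ⟨h1, h2⟩
    have h2t : P ∣ 2*t := by
      have h3 := dvd_add h1 h2
      rwa [show (t-s)+(t+s) = 2*t by ring] at h3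
    have h2s : P ∣ 2*s := by
      have h3 := dvd_sub h2 h1
      rwa [show (t+s)-(t-s) = 2*s by ring] at h3
    have hPs : P ∣ s := (hP.dvd_mul.mp h2s).resolve_left hPdvd2
    have hg : P ∣ (↑(Int.gcd r s) : ℤ) := Int.dvd_coe_gcd hPr hPs
    rw [hgcd] at hg
    exact hP.not_unit (isUnit_of_dvd_one (by exact_mod_cast hg))
  have hPside : P^2 ∣ (t-s) ∨ P^2 ∣ (t+s) := by
    have hPAB : P ∣ (t-s)*(t+s) := (dvd_pow_self P two_ne_zero).trans hP2AB
    rcases hP.dvd_mul.mp hPAB with h1 | h1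
    · left
      have hnB : ¬ P ∣ (t+s) := fun h2 => hnb ⟨h1, h2⟩
      exact (((hP.coprime_iff_not_dvd).mpr hnB).pow_left).dvd_of_dvd_mul_right hP2AB
    · right
      have hnA : ¬ P ∣ (t-s) := fun h2 => hnb ⟨h2, h1⟩
      exact (((hP.coprime_iff_not_dvd).mpr hnA).pow_left).dvd_of_dvd_mul_right
        (by rwa [mul_comm] at hP2AB)
  set f : ℕ := φ.toNat with hf
  have hφf : (f:ℤ) = φ := Int.toNat_of_nonneg (le_of_lt hφ)
  have hf0 : f ≠ 0 := by
    intro h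
    rw [h] at hφf
    simp at hφf
    omega
  set e : ℕ := f.factorization 2 with he
  set g : ℕ := f / 2^e with hg
  have hfg : 2^e * g = f := Nat.ordProj_mul_ordCompl_eq_self f 2
  have hgodd : ¬ 2 ∣ g := Nat.not_dvd_ordCompl Nat.prime_two hf0
  set w : ℤ := 2^e with hw
  have hφwg : φ = w * (g:ℤ) := by
    rw [← hφf, ← hfg, hw]; push_cast; ring
  have hg0 : g ≠ 0 := by intro h; rw [h, Nat.mul_zero] at hfg; exact hf0 hfg.symm
  have hw1 : 1 ≤ w := by rw [hw]; exact one_le_pow₀ (by norm_num)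
  -- 2-power side
  have h2side : w^2 ∣ (t-s) ∨ w^2 ∣ (t+s) := by
    rcases Nat.eq_zero_or_pos e with he0 | hepos
    · left; rw [hw, he0]; norm_num
    · have h2φ : (2:ℤ) ∣ φ := by
        rw [hφwg, hw]
        exact dvd_mul_of_dvd_left (dvd_pow_self 2 (by omega)) _
      have h2r : (2:ℤ) ∣ r := by rw [hrPφ]; exact Dvd.dvd.mul_left h2φ P
      have hsodd : ¬ (2:ℤ) ∣ s := by
        intro h2s
        have hg2 : (2:ℤ) ∣ (↑(Int.gcd r s) : ℤ) := Int.dvd_coe_gcd h2r h2s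
        rw [hgcd] at hg2
        norm_num at hg2
      have htodd : ¬ (2:ℤ) ∣ t := by
        intro h2t
        obtain ⟨t1, ht1⟩ := h2t
        obtain ⟨r1, hr1⟩ := h2r
        obtain ⟨s1, hs1⟩ : ∃ s1, s = 2*s1 + 1 := ⟨s/2, by omega⟩
        have hcontra : (1:ℤ) = 2*(2*t1^2 - 2*s1^2 - 2*s1 - 8*r1^2*s1^2 - 8*r1^2*s1 - 4*r1^2) := by
          rw [ht1, hr1, hs1] at heq; linear_combination -heq
        have : (2:ℤ) ∣ 1 := ⟨_, hcontra⟩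
        norm_num at this
      have h2A : (2:ℤ) ∣ (t-s) := by omega
      have h2B : (2:ℤ) ∣ (t+s) := by omega
      obtain ⟨A1, hA1⟩ := h2A
      obtain ⟨B1, hB1⟩ := h2B
      have hsum : A1 + B1 = t := by omega
      obtain ⟨s1, hs1⟩ : ∃ s1, s = 2*s1+1 := ⟨s/2, by omega⟩
      set c : ℤ := 2*s1^2 + 2*s1 + 1 with hc
      have hcs : 1 + s^2 = 2*c := by rw [hc, hs1]; ring
      set W : ℤ := 2^(2*e-1) with hWdef
      have hW : w^2 = 2*W := by
        rw [hw, hWdef, ← pow_mul, show e*2 = (2*e-1)+1 from by omega, pow_succ]; ring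
      have hr2w : r^2 = w^2*(P*(g:ℤ))^2 := by rw [hrPφ, hφwg]; ring
      rw [hA1, hB1, hr2w, hcs, hW] at hAB
      have h8 : (4:ℤ)*(A1*B1) = 4*(W*((P*(g:ℤ))^2*c)) := by linear_combination hAB
      have h7 : A1*B1 = W*((P*(g:ℤ))^2*c) :=
        mul_left_cancel₀ (by norm_num : (4:ℤ) ≠ 0) h8
      have hWAB : W ∣ A1*B1 := ⟨_, h7⟩
      rcases em ((2:ℤ) ∣ A1) with h2A1 | h2A1
      · have hB1odd : ¬ (2:ℤ) ∣ B1 := by omega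
        have hcop : IsCoprime W B1 :=
          ((Int.prime_two.coprime_iff_not_dvd).mpr hB1odd).pow_left
        have hWdvd : W ∣ A1 := hcop.dvd_of_dvd_mul_right hWAB
        left
        rw [hW, hA1]
        exact mul_dvd_mul_left 2 hWdvd
      · have hcop : IsCoprime W A1 :=
          ((Int.prime_two.coprime_iff_not_dvd).mpr h2A1).pow_left
        have hWdvd : W ∣ B1 := hcop.dvd_of_dvd_mul_right (by rwa [mul_comm] at hWAB)
        right
        rw [hW, hB1]
        exact mul_dvd_mul_left 2 hWdvd
  have hAnat : ((t-s).toNat : ℤ) = t - s := Int.toNat_of_nonneg (le_of_lt hApos)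
  have hBnat : ((t+s).toNat : ℤ) = t + s := Int.toNat_of_nonneg (le_of_lt hBpos)
  have hgφ : ((g:ℤ)) ∣ φ := ⟨w, by rw [hφwg]; ring⟩
  have hgr : ((g:ℤ)) ∣ r := hgφ.trans ⟨P, by rw [hrPφ]; ring⟩
  have hg2AB : g^2 ∣ (t-s).toNat * (t+s).toNat := by
    have hZ : ((g:ℤ))^2 ∣ (t-s)*(t+s) := by
      rw [hAB]; exact dvd_mul_of_dvd_left (pow_dvd_pow_of_dvd hgr 2) _
    have h2 : ((g:ℤ))^2 ∣ ((t-s).toNat : ℤ) * ((t+s).toNat : ℤ) := by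
      rw [hAnat, hBnat]; exact hZ
    exact_mod_cast h2
  obtain ⟨a, b, hab, haA, hbB⟩ := my_split g ((t-s).toNat) ((t+s).toNat)
    (Nat.odd_iff.mpr (by omega)) hg2AB
    (by
      rintro p hp hpg ⟨hpA, hpB⟩
      have hpZ : Prime (p:ℤ) := Nat.prime_iff_prime_int.mp hp
      have hpA' : (p:ℤ) ∣ t - s := by rw [← hAnat]; exact_mod_cast hpA
      have hpB' : (p:ℤ) ∣ t + s := by rw [← hBnat]; exact_mod_cast hpB
      have h2t : (p:ℤ) ∣ 2*t := by
        have h3 := dvd_add hpA' hpB'; rwa [show (t-s)+(t+s) = 2*t by ring] at h3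
      have h2s : (p:ℤ) ∣ 2*s := by
        have h3 := dvd_sub hpB' hpA'; rwa [show (t+s)-(t-s) = 2*s by ring] at h3
      have hp2 : ¬ (p:ℤ) ∣ 2 := by
        intro hd
        have hd' : p ∣ 2 := by exact_mod_cast hd
        have hpe : p = 2 := (Nat.prime_dvd_prime_iff_eq hp Nat.prime_two).mp hd'
        rw [hpe] at hpg
        exact hgodd hpg
      have hps : (p:ℤ) ∣ s := (hpZ.dvd_mul.mp h2s).resolve_left hp2
      have hpr : (p:ℤ) ∣ r := (Int.natCast_dvd_natCast.mpr hpg : (p:ℤ) ∣ (g:ℤ)).trans hgr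
      have hgd : (p:ℤ) ∣ (↑(Int.gcd r s):ℤ) := Int.dvd_coe_gcd hpr hps
      rw [hgcd] at hgd
      exact hpZ.not_unit (isUnit_of_dvd_one (by exact_mod_cast hgd)))
  have ha0 : a ≠ 0 := by rintro rfl; rw [zero_mul] at hab; exact hg0 hab
  have hb0 : b ≠ 0 := by rintro rfl; rw [mul_zero] at hab; exact hg0 hab
  have haZ : ((a:ℤ))^2 ∣ t - s := by rw [← hAnat]; exact_mod_cast haA
  have hbZ : ((b:ℤ))^2 ∣ t + s := by rw [← hBnat]; exact_mod_cast hbB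
  have habZ : (g:ℤ) = (a:ℤ)*(b:ℤ) := by exact_mod_cast hab
  have haφ : ((a:ℤ)) ∣ φ := dvd_trans ⟨(b:ℤ), habZ⟩ hgφ
  have hbφ : ((b:ℤ)) ∣ φ := dvd_trans ⟨(a:ℤ), by rw [habZ]; ring⟩ hgφ
  have ha1 : 1 ≤ (a:ℤ) := by exact_mod_cast Nat.one_le_iff_ne_zero.mpr ha0
  have hb1 : 1 ≤ (b:ℤ) := by exact_mod_cast Nat.one_le_iff_ne_zero.mpr hb0
  have h2a : ¬ (2:ℤ) ∣ (a:ℤ) := by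
    intro hd
    have hd' : 2 ∣ a := by exact_mod_cast hd
    exact hgodd (hd'.trans ⟨b, hab⟩)
  have h2b : ¬ (2:ℤ) ∣ (b:ℤ) := by
    intro hd
    have hd' : 2 ∣ b := by exact_mod_cast hd
    exact hgodd (hd'.trans ⟨a, by rw [hab]; ring⟩)
  have hcopPw : IsCoprime P w := by
    rw [hw]; exact ((hP.coprime_iff_not_dvd).mpr hPdvd2).pow_right
  have hcopPa : IsCoprime P (a:ℤ) := (hP.coprime_iff_not_dvd).mpr (fun h => hPφ (h.trans haφ))
  have hcopPb : IsCoprime P (b:ℤ) := (hP.coprime_iff_not_dvd).mpr (fun h => hPφ (h.trans hbφ))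
  have hcopwa : IsCoprime w (a:ℤ) := by
    rw [hw]; exact ((Int.prime_two.coprime_iff_not_dvd).mpr h2a).pow_left
  have hcopwb : IsCoprime w (b:ℤ) := by
    rw [hw]; exact ((Int.prime_two.coprime_iff_not_dvd).mpr h2b).pow_left
  have hP1 : 1 ≤ P := by linarith
  rcases hPside with hPA | hPB
  · -- P-part divides t - s : derive contradiction via core1
    exfalso
    rcases h2side with h2A | h2B
    · -- m = P*w*a, q = b
      have hm2A : (P*w*(a:ℤ))^2 ∣ t - s := by
        rw [mul_pow]
        refine ((hcopPa.mul_left hcopwa).pow).mul_dvd ?_ haZ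
        rw [mul_pow]
        exact (hcopPw.pow).mul_dvd hPA h2A
      have hmq : (P*w*(a:ℤ))*(b:ℤ) = r := by rw [hrPφ, hφwg, habZ]; ring
      have hm1 : 1 ≤ P*w*(a:ℤ) := one_le_mul' (one_le_mul' hP1 hw1) ha1
      obtain ⟨u, hu⟩ := hm2A
      obtain ⟨v, hv⟩ := hbZ
      have hm0 : (P*w*(a:ℤ))^2*((b:ℤ))^2 ≠ 0 := sq_sq_ne hm1 hb1
      have huv : u*v = 1+s^2 := by
        apply mul_left_cancel₀ hm0
        calc (P*w*(a:ℤ))^2*((b:ℤ))^2*(u*v) = ((P*w*(a:ℤ))^2*u)*(((b:ℤ))^2*v) := by ring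
        _ = (t-s)*(t+s) := by rw [← hu, ← hv]
        _ = r^2*(1+s^2) := hAB
        _ = (P*w*(a:ℤ))^2*((b:ℤ))^2*(1+s^2) := by rw [← hmq]; ring
      exact core1 r φ s t (P*w*(a:ℤ)) (b:ℤ) u v hφ hφ4 hbφ hb1 hm1 hmq hs hu hv huv hALT hApos hBpos
    · -- m = P*a, q = w*b
      have hm2A : (P*(a:ℤ))^2 ∣ t - s := by
        rw [mul_pow]; exact (hcopPa.pow).mul_dvd hPA haZ
      have hq2B : (w*(b:ℤ))^2 ∣ t + s := by
        rw [mul_pow]; exact (hcopwb.pow).mul_dvd h2B hbZ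
      have hqφ : w*(b:ℤ) ∣ φ := ⟨a, by rw [hφwg, habZ]; ring⟩
      have hmq : (P*(a:ℤ))*(w*(b:ℤ)) = r := by rw [hrPφ, hφwg, habZ]; ring
      have hm1 : 1 ≤ P*(a:ℤ) := one_le_mul' hP1 ha1
      have hq1 : 1 ≤ w*(b:ℤ) := one_le_mul' hw1 hb1
      obtain ⟨u, hu⟩ := hm2A
      obtain ⟨v, hv⟩ := hq2B
      have hm0 : (P*(a:ℤ))^2*(w*(b:ℤ))^2 ≠ 0 := sq_sq_ne hm1 hq1
      have huv : u*v = 1+s^2 := by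
        apply mul_left_cancel₀ hm0
        calc (P*(a:ℤ))^2*(w*(b:ℤ))^2*(u*v) = ((P*(a:ℤ))^2*u)*((w*(b:ℤ))^2*v) := by ring
        _ = (t-s)*(t+s) := by rw [← hu, ← hv]
        _ = r^2*(1+s^2) := hAB
        _ = (P*(a:ℤ))^2*(w*(b:ℤ))^2*(1+s^2) := by rw [← hmq]; ring
      exact core1 r φ s t (P*(a:ℤ)) (w*(b:ℤ)) u v hφ hφ4 hqφ hq1 hm1 hmq hs hu hv huv hALT hApos hBpos
  · -- P-part divides t + s : get s = r - 1 via core2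
    have hs' : s = r - 1 := by
      rcases h2side with h2A | h2B
      · -- m = w*a, q = P*b
        have hm2A : (w*(a:ℤ))^2 ∣ t - s := by
          rw [mul_pow]; exact (hcopwa.pow).mul_dvd h2A haZ
        have hq2B : (P*(b:ℤ))^2 ∣ t + s := by
          rw [mul_pow]; exact (hcopPb.pow).mul_dvd hPB hbZ
        have hmφ : w*(a:ℤ) ∣ φ := ⟨b, by rw [hφwg, habZ]; ring⟩
        have hmq : (w*(a:ℤ))*(P*(b:ℤ)) = r := by rw [hrPφ, hφwg, habZ]; ring
        have hm1 : 1 ≤ w*(a:ℤ) := one_le_mul' hw1 ha1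
        have hq1 : 1 ≤ P*(b:ℤ) := one_le_mul' hP1 hb1
        obtain ⟨u, hu⟩ := hm2A
        obtain ⟨v, hv⟩ := hq2B
        have hm0 : (w*(a:ℤ))^2*(P*(b:ℤ))^2 ≠ 0 := sq_sq_ne hm1 hq1
        have huv : u*v = 1+s^2 := by
          apply mul_left_cancel₀ hm0
          calc (w*(a:ℤ))^2*(P*(b:ℤ))^2*(u*v) = ((w*(a:ℤ))^2*u)*((P*(b:ℤ))^2*v) := by ring
          _ = (t-s)*(t+s) := by rw [← hu, ← hv]
          _ = r^2*(1+s^2) := hAB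
          _ = (w*(a:ℤ))^2*(P*(b:ℤ))^2*(1+s^2) := by rw [← hmq]; ring
        exact core2 r φ s t (w*(a:ℤ)) (P*(b:ℤ)) u v hφ hφ4 hmφ hq1 hm1 hmq hs hu hv huv hBLT hApos hBpos
      · -- m = a, q = P*w*b
        have hq2B : (P*w*(b:ℤ))^2 ∣ t + s := by
          rw [mul_pow]
          refine ((hcopPb.mul_left hcopwb).pow).mul_dvd ?_ hbZ
          rw [mul_pow]
          exact (hcopPw.pow).mul_dvd hPB h2B
        have hmq : ((a:ℤ))*(P*w*(b:ℤ)) = r := by rw [hrPφ, hφwg, habZ]; ring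
        have hq1 : 1 ≤ P*w*(b:ℤ) := one_le_mul' (one_le_mul' hP1 hw1) hb1
        obtain ⟨u, hu⟩ := haZ
        obtain ⟨v, hv⟩ := hq2B
        have hm0 : ((a:ℤ))^2*(P*w*(b:ℤ))^2 ≠ 0 := sq_sq_ne ha1 hq1
        have huv : u*v = 1+s^2 := by
          apply mul_left_cancel₀ hm0
          calc ((a:ℤ))^2*(P*w*(b:ℤ))^2*(u*v) = (((a:ℤ))^2*u)*((P*w*(b:ℤ))^2*v) := by ring
          _ = (t-s)*(t+s) := by rw [← hu, ← hv]
          _ = r^2*(1+s^2) := hAB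
          _ = ((a:ℤ))^2*(P*w*(b:ℤ))^2*(1+s^2) := by rw [← hmq]; ring
        exact core2 r φ s t ((a:ℤ)) (P*w*(b:ℤ)) u v hφ hφ4 haφ hq1 ha1 hmq hs hu hv huv hBLT hApos hBpos
    have htval : t = r^2 - r + 1 := by
      rw [hs'] at heq
      have hfac : (t - (r^2-r+1))*(t + (r^2-r+1)) = 0 := by linear_combination heq
      rcases mul_eq_zero.mp hfac with h | h
      · linarith
      · nlinarith
    have hts : t + s = r^2 := by rw [htval, hs']; ring
    rw [hts]

set_option maxHeartbeats 1000000 in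
lemma all_sols (r P φ : ℤ) (hP : Prime P) (hφ : 0 < φ) (hrPφ : r = P * φ)
    (hφ4 : φ^4 < r) :
    ∀ n : ℕ, ∀ s t : ℤ, s.toNat ≤ n → 0 < s → 0 < t → Int.gcd r s = 1 →
      t^2 - (1+r^2)*s^2 = r^2 → (r^2 ∣ t - s ∨ r^2 ∣ t + s) := by
  have hφ1 : 1 ≤ φ := hφ
  have hφ2 : 1 ≤ φ^2 := by nlinarith
  have hφ41 : 1 ≤ φ^4 := by nlinarith
  have hr2 : 2 ≤ r := by linarith
  intro n
  induction n with
  | zero => intro s t hn hs ht hgcd heq; exfalso; omega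
  | succ n ih =>
    intro s t hn hs ht hgcd heq
    rcases lt_or_ge s r with hsr | hsr
    · exact Or.inr (base_case r P φ s t hP hφ hrPφ hφ4 hs hsr ht hgcd heq)
    · -- descent step
      have htgt : r*s < t := by
        by_contra hc
        push_neg at hc
        have h2 : t^2 ≤ (r*s)^2 := pow_le_pow_left₀ (le_of_lt ht) hc 2
        nlinarith [sq_nonneg s, mul_pos (show (0:ℤ) < r by linarith) (show (0:ℤ) < r by linarith)]
      set t' : ℤ := (2*r^2+1)*t - 2*r*(1+r^2)*s with ht'def
      set s' : ℤ := (2*r^2+1)*s - 2*r*t with hs'def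
      have heq' : t'^2 - (1+r^2)*s'^2 = r^2 := by
        rw [ht'def, hs'def]; linear_combination heq
      have ht'pos : 0 < t' := by
        have hsq : ((2*r^2+1)*t)^2 - (2*r*(1+r^2)*s)^2
            = (2*r^2+1)^2*r^2 + (1+r^2)*s^2 := by
          linear_combination (2*r^2+1)^2 * heq
        by_contra hc
        push_neg at hc
        rw [ht'def] at hc
        have hX : (0:ℤ) ≤ (2*r^2+1)*t := by positivity
        have h2 : ((2*r^2+1)*t)^2 ≤ (2*r*(1+r^2)*s)^2 :=
          pow_le_pow_left₀ hX (by linarith) 2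
        nlinarith [sq_nonneg r, mul_pos (mul_pos (show (0:ℤ) < 2*r^2+1 by positivity)
          (show (0:ℤ) < 2*r^2+1 by positivity)) (mul_pos (show (0:ℤ) < r by linarith)
          (show (0:ℤ) < r by linarith))]
      have hslt : s' < s := by
        rw [hs'def]
        nlinarith [mul_lt_mul_of_pos_left htgt (show (0:ℤ) < 2*r by linarith)]
      have hsgt : -s < s' := by
        have h1 : ((r^2+1)*s)^2 - (r*t)^2 = (1+r^2)*s^2 - r^4 := by
          linear_combination -(r^2)*heq
        have hs2 : r^2 ≤ s^2 := by nlinarith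
        have h2 : 0 < (1+r^2)*s^2 - r^4 := by nlinarith
        have h3 : r*t < (r^2+1)*s := by
          by_contra hc
          push_neg at hc
          have h4 : ((r^2+1)*s)^2 ≤ (r*t)^2 :=
            pow_le_pow_left₀ (by positivity) hc 2
          linarith
        rw [hs'def]
        nlinarith
      have hs'eq : s' = s + r*(2*r*s - 2*t) := by rw [hs'def]; ring
      have hgcd' : Int.gcd r s' = 1 := by rw [hs'eq, gcd_stable, hgcd]
      have hs'ne : s' ≠ 0 := by
        intro h0
        rw [h0] at hgcd'
        simp [Int.gcd_zero_right] at hgcd'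
        omega
      have htrans1 : t' - s' = (1+2*r)*(t-s) + r^2*(2*t - 2*r*s - 2*s) := by
        rw [ht'def, hs'def]; ring
      have htrans2 : t' + s' = (1-2*r)*(t+s) + r^2*(2*t - 2*r*s + 2*s) := by
        rw [ht'def, hs'def]; ring
      have hcop1 : IsCoprime (r^2) (1+2*r) :=
        IsCoprime.pow_left (⟨-2, 1, by ring⟩ : IsCoprime r (1+2*r))
      have hcop2 : IsCoprime (r^2) (1-2*r) :=
        IsCoprime.pow_left (⟨2, 1, by ring⟩ : IsCoprime r (1-2*r))
      have key : r^2 ∣ t' - s' ∨ r^2 ∣ t' + s' → r^2 ∣ t - s ∨ r^2 ∣ t + s := by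
        rintro (hd | hd)
        · left
          have h2 : r^2 ∣ (1+2*r)*(t-s) := by
            have h3 := dvd_sub hd (dvd_mul_right (r^2) (2*t - 2*r*s - 2*s))
            rwa [htrans1, show (1+2*r)*(t-s) + r^2*(2*t - 2*r*s - 2*s)
              - r^2*(2*t - 2*r*s - 2*s) = (1+2*r)*(t-s) by ring] at h3
          exact hcop1.dvd_of_dvd_mul_left h2
        · right
          have h2 : r^2 ∣ (1-2*r)*(t+s) := by
            have h3 := dvd_sub hd (dvd_mul_right (r^2) (2*t - 2*r*s + 2*s))
            rwa [htrans2, show (1-2*r)*(t+s) + r^2*(2*t - 2*r*s + 2*s)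
              - r^2*(2*t - 2*r*s + 2*s) = (1-2*r)*(t+s) by ring] at h3
          exact hcop2.dvd_of_dvd_mul_left h2
      rcases lt_or_gt_of_ne hs'ne with hneg | hpos
      · have hgcdneg : Int.gcd r (-s') = 1 := by
          have h5 : Int.gcd r (-s') = Int.gcd r s' := by
            unfold Int.gcd; rw [Int.natAbs_neg]
          rw [h5, hgcd']
        have heqneg : t'^2 - (1+r^2)*(-s')^2 = r^2 := by linear_combination heq'
        have hres := ih (-s') t' (by omega) (by omega) ht'pos hgcdneg heqneg
        apply key
        rcases hres with hd | hd
        · right; rwa [show t' - -s' = t' + s' by ring] at hd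
        · left; rwa [show t' + -s' = t' - s' by ring] at hd
      · have hres := ih s' t' (by omega) hpos ht'pos hgcd' heq'
        exact key hres

/-- Equivalence of solutions `(x, y)` and `(x', y')` of `X² - d Y² = n`. -/
def solEquiv (d n x y x' y' : ℤ) : Prop :=
  x * x' ≡ d * (y * y') [ZMOD n] ∧ x * y' ≡ y * x' [ZMOD n]

theorem stmt_16 (r P φ : ℤ) (hP : Prime P) (hφ : 0 < φ) (hrPφ : r = P * φ)
    (hφ4 : φ ^ 4 < r) :
    ¬ ∃ s t : ℤ, 0 < s ∧ 0 < t ∧ Int.gcd r s = 1 ∧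
      t ^ 2 - (1 + r ^ 2) * s ^ 2 = r ^ 2 ∧
      ¬ solEquiv (1 + r ^ 2) (r ^ 2) t s (1 + r ^ 2 - r) (r - 1) ∧
      ¬ solEquiv (1 + r ^ 2) (r ^ 2) t s (1 + r ^ 2 - r) (-(r - 1)) := by
  rintro ⟨s, t, hs, ht, hgcd, heq, hne1, hne2⟩
  rcases all_sols r P φ hP hφ hrPφ hφ4 s.toNat s t le_rfl hs ht hgcd heq with hd | hd
  · -- t ≡ s (mod r²) : equivalent to (1+r²-r, -(r-1))
    apply hne2
    have hts : t ≡ s [ZMOD r^2] := Int.ModEq.symm (Int.modEq_iff_dvd.mpr hd)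
    constructor
    · exact (hts.mul_right _).trans (Int.modEq_iff_dvd.mpr ⟨-s*r, by ring⟩)
    · exact (hts.mul_right _).trans (Int.modEq_iff_dvd.mpr ⟨s, by ring⟩)
  · -- t ≡ -s (mod r²) : equivalent to (1+r²-r, r-1)
    apply hne1
    have hts : t ≡ -s [ZMOD r^2] := Int.modEq_iff_dvd.mpr (by
      have h2 := dvd_neg.mpr hd
      rwa [show -(t+s) = -s - t by ring] at h2)
    constructor
    · exact (hts.mul_right _).trans (Int.modEq_iff_dvd.mpr ⟨s*r, by ring⟩)
    · exact (hts.mul_right _).trans (Int.modEq_iff_dvd.mpr ⟨s, by ring⟩)
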